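/- The capacity of entanglement as Kullback–Leibler curvature along the escort trajectory: let p be a strictly positive probability vector on Fin d. For ε ≠ 0, the Kullback–Leibler divergence from p to its escort distribution of order 1+ε (whose i-th entry is (p i)^(1+ε) / ∑ j, (p j)^(1+ε)) equals D ε = Real.log (∑ i, (p i) ^ (1+ε)) - ε * ∑ i, p i * Real.log (p i). Then the function ε ↦ (2 / ε^2) * D ε tends to V p as ε tends to 0 along nonzero values, i.e., Filter.Tendsto (fun ε => (2 / ε^2) * (Real.log (∑ i, (p i) ^ (1+ε)) - ε * ∑ i, p i * Real.log (p i))) (nhdsWithin 0 {0}ᶜ) (nhds (V p)). -/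

import Mathlib

/-- The capacity of entanglement (varentropy) of a strictly positive
probability vector. -/
noncomputable def V {d : ℕ} (p : Fin d → ℝ) : ℝ :=
  (∑ i, p i * (Real.log (p i)) ^ 2) - (∑ i, p i * Real.log (p i)) ^ 2

private theorem key_deriv (c L x : ℝ) :
    HasDerivAt (fun t : ℝ => c * Real.exp (t * L)) (c * L * Real.exp (x * L)) x := by
  have := ((hasDerivAt_mul_const L (x := x)).exp).const_mul c
  exact this.congr_deriv (by ring)

/-- The capacity of entanglement as Kullback–Leibler curvature along the
escort trajectory. -/
theorem capacity_as_KL_curvature {d : ℕ} (p : Fin d → ℝ)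
    (hp : ∀ i, 0 < p i) (hp1 : ∑ i, p i = 1) :
    Filter.Tendsto
      (fun ε : ℝ => (2 / ε ^ 2) *
        (Real.log (∑ i, (p i) ^ (1 + ε)) - ε * ∑ i, p i * Real.log (p i)))
      (nhdsWithin 0 {0}ᶜ) (nhds (V p)) := by
  classical
  set S : ℝ := ∑ i, p i * Real.log (p i) with hSdef
  set f : ℝ → ℝ := fun ε => ∑ i, p i * Real.exp (ε * Real.log (p i)) with hfdef
  set g : ℝ → ℝ := fun ε => ∑ i, p i * Real.log (p i) * Real.exp (ε * Real.log (p i)) with hgdef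
  set h : ℝ → ℝ := fun ε => ∑ i, p i * Real.log (p i) * Real.log (p i) *
      Real.exp (ε * Real.log (p i)) with hhdef
  have hne : (Finset.univ : Finset (Fin d)).Nonempty := by
    by_contra hc
    rw [Finset.not_nonempty_iff_eq_empty] at hc
    rw [hc, Finset.sum_empty] at hp1
    norm_num at hp1
  have hfpos : ∀ ε, 0 < f ε := fun ε =>
    Finset.sum_pos (fun i _ => mul_pos (hp i) (Real.exp_pos _)) hne
  have hf' : ∀ x, HasDerivAt f (g x) x := fun x =>
    HasDerivAt.fun_sum fun i _ => key_deriv (p i) (Real.log (p i)) x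
  have hg' : ∀ x, HasDerivAt g (h x) x := fun x =>
    HasDerivAt.fun_sum fun i _ => key_deriv (p i * Real.log (p i)) (Real.log (p i)) x
  have hf0 : f 0 = 1 := by simp [hfdef, hp1]
  have hg0 : g 0 = S := by simp [hgdef, hSdef]
  -- numerator and its derivatives
  set N : ℝ → ℝ := fun ε => 2 * (Real.log (f ε) - ε * S) with hNdef
  set N' : ℝ → ℝ := fun ε => 2 * (g ε / f ε - S) with hN'def
  set N'' : ℝ → ℝ := fun ε => 2 * ((h ε * f ε - g ε * g ε) / (f ε) ^ 2) with hN''def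
  have hN : ∀ x, HasDerivAt N (N' x) x := by
    intro x
    exact (((hf' x).log (hfpos x).ne').sub (hasDerivAt_mul_const S)).const_mul 2
  have hN' : ∀ x, HasDerivAt N' (N'' x) x := by
    intro x
    exact (((hg' x).div (hf' x) (hfpos x).ne').sub_const S).const_mul 2
  have hcontN : Continuous N := by
    fun_prop (disch := intro x; exact (hfpos x).ne')
  have hN0 : N 0 = 0 := by simp [hNdef, hf0]
  have hN'0 : N' 0 = 0 := by simp [hN'def, hf0, hg0]
  have hVval : N'' 0 / 2 = V p := by
    have hh0 : h 0 = ∑ i, p i * (Real.log (p i)) ^ 2 := by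
      simp [hhdef, sq, mul_assoc]
    simp [hN''def, hf0, hg0, hh0, V, sq, hSdef]
  -- inner L'Hôpital : N' / (2 x)
  have inner : Filter.Tendsto (fun x : ℝ => N' x / (2 * x)) (nhdsWithin 0 {0}ᶜ)
      (nhds (V p)) := by
    apply HasDerivAt.lhopital_zero_nhds (f' := N'') (g' := fun _ : ℝ => (2 : ℝ))
    · exact Filter.Eventually.of_forall hN'
    · exact Filter.Eventually.of_forall fun x => by
        simpa using (hasDerivAt_id x).const_mul (2 : ℝ)
    · exact Filter.Eventually.of_forall fun x => two_ne_zero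
    · have hc : Continuous N' := continuous_iff_continuousAt.mpr fun x => (hN' x).continuousAt
      have := hc.tendsto 0
      rwa [hN'0] at this
    · simpa using (continuous_mul_left (2 : ℝ)).tendsto (0 : ℝ)
    · have cf : Continuous f := continuous_iff_continuousAt.mpr fun x => (hf' x).continuousAt
      have cg : Continuous g := continuous_iff_continuousAt.mpr fun x => (hg' x).continuousAt
      have ch : Continuous h := continuous_finset_sum _ fun i _ => by fun_prop
      have hc : Continuous fun x => N'' x / 2 := by
        have hc2 : Continuous N'' := continuous_const.mul
          (((ch.mul cf).sub (cg.mul cg)).div (cf.pow 2)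
            fun x => pow_ne_zero 2 (hfpos x).ne')
        exact hc2.div_const 2
      have := hc.tendsto 0
      rwa [hVval] at this
  -- outer L'Hôpital : N / x ^ 2
  have outer : Filter.Tendsto (fun x : ℝ => N x / x ^ 2) (nhdsWithin 0 {0}ᶜ)
      (nhds (V p)) := by
    apply HasDerivAt.lhopital_zero_nhdsNE (f' := N') (g' := fun x : ℝ => 2 * x)
    · exact Filter.Eventually.of_forall hN
    · exact Filter.Eventually.of_forall fun x => by
        simpa [mul_comm] using hasDerivAt_pow 2 x
    · filter_upwards [self_mem_nhdsWithin] with x hx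
      exact mul_ne_zero two_ne_zero hx
    · have := hcontN.tendsto 0
      rw [hN0] at this
      exact this.mono_left nhdsWithin_le_nhds
    · have := (continuous_pow 2).tendsto (0 : ℝ)
      simp only [ne_eq, OfNat.ofNat_ne_zero, not_false_eq_true, zero_pow] at this
      simpa using this.mono_left nhdsWithin_le_nhds
    · exact inner
  refine outer.congr fun ε => ?_
  have hsum : (∑ i, (p i) ^ (1 + ε)) = f ε := by
    refine Finset.sum_congr rfl fun i _ => ?_
    rw [Real.rpow_def_of_pos (hp i),
      show Real.log (p i) * (1 + ε) = Real.log (p i) + ε * Real.log (p i) by ring,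
      Real.exp_add, Real.exp_log (hp i)]
  rw [hsum]
  simp only [hNdef]
  ring
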